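/- Let X be a CAT(-1) space with an ε-separated family {A_i} of closed convex subsets, and form the graph Γ_u with vertex set {A_i} and an edge between A_i and A_j whenever dist(A_i, A_j) ≤ u. If two vertices are joined by an edge of Γ_u, then they are joined by a path of length at most u/ε in the subgraph Γ'_u, where A_i and A_j are adjacent in Γ'_u if and only if the shortest segment between them meets no other member A_k of the family. -/

import Mathlib

noncomputable section
open Metric Set

/-- `γ` restricted to `[a,b]` is a unit-speed (minimizing) geodesic segment. -/
def IsGeodesicOn {X : Type*} [MetricSpace X] (γ : ℝ → X) (a b : ℝ) : Prop :=
  a ≤ b ∧ ∀ s ∈ Set.Icc a b, ∀ t ∈ Set.Icc a b, dist (γ s) (γ t) = |s - t|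

/-- Every pair of points is joined by a geodesic segment. -/
def IsGeodesicSpace (X : Type*) [MetricSpace X] : Prop :=
  ∀ x y : X, ∃ γ : ℝ → X, IsGeodesicOn γ 0 (dist x y) ∧ γ 0 = x ∧ γ (dist x y) = y

/-- Comparison condition defining CAT spaces with model space `M`:
for any geodesic triangle and a comparison triangle in `M`, distances between
points on two sides issuing from a common vertex are bounded by the
corresponding distances in the comparison triangle. -/
def CATWith (M : Type*) [MetricSpace M] (X : Type*) [MetricSpace X] : Prop :=
  IsGeodesicSpace X ∧
  ∀ (p q r : X) (γ δ : ℝ → X),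
    IsGeodesicOn γ 0 (dist p q) → γ 0 = p → γ (dist p q) = q →
    IsGeodesicOn δ 0 (dist p r) → δ 0 = p → δ (dist p r) = r →
    ∀ (p' q' r' : M) (γ' δ' : ℝ → M),
      dist p' q' = dist p q → dist p' r' = dist p r → dist q' r' = dist q r →
      IsGeodesicOn γ' 0 (dist p q) → γ' 0 = p' → γ' (dist p q) = q' →
      IsGeodesicOn δ' 0 (dist p r) → δ' 0 = p' → δ' (dist p r) = r' →
      ∀ s ∈ Set.Icc (0:ℝ) (dist p q), ∀ t ∈ Set.Icc (0:ℝ) (dist p r),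
        dist (γ s) (δ t) ≤ dist (γ' s) (δ' t)

/-- A CAT(-1) space: comparison with the hyperbolic plane of curvature `-1`. -/
def CATMinusOne (X : Type*) [MetricSpace X] : Prop := CATWith UpperHalfPlane X

/-- A CAT(0) space: comparison with the Euclidean plane. -/
def CATZero (X : Type*) [MetricSpace X] : Prop := CATWith (EuclideanSpace ℝ (Fin 2)) X

/-- A subset is (geodesically) convex if it contains every geodesic segment
between any two of its points. -/
def GConvex {X : Type*} [MetricSpace X] (A : Set X) : Prop :=
  ∀ (γ : ℝ → X) (a b : ℝ), IsGeodesicOn γ a b → γ a ∈ A → γ b ∈ A →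
    ∀ t ∈ Set.Icc a b, γ t ∈ A

/-- Distance between two subsets: the infimum of distances between their points. -/
def setDist {X : Type*} [MetricSpace X] (A B : Set X) : ℝ :=
  sInf ((fun p : X × X => dist p.1 p.2) '' A ×ˢ B)

end

/-- Adjacency in the `u`-nerve `Γ_u` of the family `A`. -/
def GammaAdj {X : Type*} [MetricSpace X] {ι : Type*} (A : ι → Set X) (u : ℝ)
    (i j : ι) : Prop :=
  i ≠ j ∧ setDist (A i) (A j) ≤ u

/-- Adjacency in the subgraph `Γ'_u`: additionally the shortest segment between
`A i` and `A j` meets no other member of the family. -/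
def GammaPrimeAdj {X : Type*} [MetricSpace X] {ι : Type*} (A : ι → Set X) (u : ℝ)
    (i j : ι) : Prop :=
  GammaAdj A u i j ∧ ∃ (γ : ℝ → X) (L : ℝ), L = setDist (A i) (A j) ∧
    IsGeodesicOn γ 0 L ∧ γ 0 ∈ A i ∧ γ L ∈ A j ∧
    ∀ k, k ≠ i → k ≠ j → ∀ t ∈ Set.Icc (0:ℝ) L, γ t ∉ A k

lemma setDist_le_dist {X : Type*} [MetricSpace X] {A B : Set X} {x y : X}
    (hx : x ∈ A) (hy : y ∈ B) : setDist A B ≤ dist x y := by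
  apply csInf_le
  · exact ⟨0, by rintro r ⟨⟨a, b⟩, -, rfl⟩; exact dist_nonneg⟩
  · exact ⟨(x, y), ⟨hx, hy⟩, rfl⟩

lemma key_induction {X : Type*} [MetricSpace X] {ι : Type*} (A : ι → Set X) (ε : ℝ)
    (hε : 0 < ε)
    (hsep : ∀ i j, i ≠ j → ε ≤ setDist (A i) (A j))
    (hexists : ∀ i j, i ≠ j → ∃ (γ : ℝ → X) (L : ℝ), L = setDist (A i) (A j) ∧
      IsGeodesicOn γ 0 L ∧ γ 0 ∈ A i ∧ γ L ∈ A j)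
    (u : ℝ) :
    ∀ N : ℕ, ∀ i j : ι, i ≠ j → setDist (A i) (A j) ≤ u →
      setDist (A i) (A j) ≤ (N + 1) * ε →
      ∃ (n : ℕ) (f : ℕ → ι), 0 < n ∧ (n : ℝ) ≤ setDist (A i) (A j) / ε ∧
        f 0 = i ∧ f n = j ∧ ∀ m < n, GammaPrimeAdj A u (f m) (f (m + 1)) := by
  intro N
  induction N with
  | zero =>
    intro i j hij hu hN
    obtain ⟨γ, L, hL, hgeo, h0, h1⟩ := hexists i j hij
    by_cases hcase : ∃ k, k ≠ i ∧ k ≠ j ∧ ∃ t ∈ Set.Icc (0:ℝ) L, γ t ∈ A k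
    · -- impossible: L would be ≥ 2ε
      exfalso
      obtain ⟨k, hki, hkj, t, ht, htk⟩ := hcase
      have h1k : setDist (A i) (A k) ≤ t := by
        have := hgeo.2 0 ⟨le_refl 0, hgeo.1⟩ t ht
        calc setDist (A i) (A k) ≤ dist (γ 0) (γ t) := setDist_le_dist h0 htk
          _ = t := by rw [this]; rw [abs_of_nonpos (by linarith [ht.1])]; ring
      have h2k : setDist (A k) (A j) ≤ L - t := by
        have := hgeo.2 t ht L ⟨hgeo.1, le_refl L⟩
        calc setDist (A k) (A j) ≤ dist (γ t) (γ L) := setDist_le_dist htk h1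
          _ = L - t := by rw [this, abs_of_nonpos (by linarith [ht.2])]; ring
      have e1 := hsep i k (Ne.symm hki)
      have e2 := hsep k j hkj
      have : (2:ℝ) * ε ≤ L := by linarith
      rw [hL] at this
      norm_num at hN
      linarith
    · push_neg at hcase
      refine ⟨1, fun m => if m = 0 then i else j, one_pos, ?_, rfl, rfl, ?_⟩
      · rw [Nat.cast_one, le_div_iff₀ hε, one_mul]
        exact hsep i j hij
      · intro m hm
        interval_cases m
        simp only [if_pos rfl, if_neg one_ne_zero]
        exact ⟨⟨hij, hu⟩, γ, L, hL, hgeo, h0, h1, fun k hki hkj t ht =>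
          hcase k hki hkj t ht⟩
  | succ N ih =>
    intro i j hij hu hN
    obtain ⟨γ, L, hL, hgeo, h0, h1⟩ := hexists i j hij
    by_cases hcase : ∃ k, k ≠ i ∧ k ≠ j ∧ ∃ t ∈ Set.Icc (0:ℝ) L, γ t ∈ A k
    · obtain ⟨k, hki, hkj, t, ht, htk⟩ := hcase
      have h1k : setDist (A i) (A k) ≤ t := by
        have := hgeo.2 0 ⟨le_refl 0, hgeo.1⟩ t ht
        calc setDist (A i) (A k) ≤ dist (γ 0) (γ t) := setDist_le_dist h0 htk
          _ = t := by rw [this]; rw [abs_of_nonpos (by linarith [ht.1])]; ring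
      have h2k : setDist (A k) (A j) ≤ L - t := by
        have := hgeo.2 t ht L ⟨hgeo.1, le_refl L⟩
        calc setDist (A k) (A j) ≤ dist (γ t) (γ L) := setDist_le_dist htk h1
          _ = L - t := by rw [this, abs_of_nonpos (by linarith [ht.2])]; ring
      have e1 := hsep i k (Ne.symm hki)
      have e2 := hsep k j hkj
      have hLu : L ≤ u := hL ▸ hu
      have hLN : L ≤ (N + 1 + 1) * ε := by rw [hL]; push_cast at hN ⊢; linarith
      have bound1 : setDist (A i) (A k) ≤ (N + 1) * ε := by
        push_cast; push_cast at hLN; nlinarith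
      have bound2 : setDist (A k) (A j) ≤ (N + 1) * ε := by
        push_cast; push_cast at hLN; nlinarith
      obtain ⟨n₁, f₁, hn₁, hb₁, hf₁0, hf₁n, he₁⟩ :=
        ih i k (Ne.symm hki) (by linarith) bound1
      obtain ⟨n₂, f₂, hn₂, hb₂, hf₂0, hf₂n, he₂⟩ :=
        ih k j hkj (by linarith) bound2
      refine ⟨n₁ + n₂, fun m => if m ≤ n₁ then f₁ m else f₂ (m - n₁),
        by positivity, ?_, ?_, ?_, ?_⟩
      · push_cast
        have b1 : (n₁ : ℝ) ≤ t / ε := le_trans hb₁ (by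
          apply div_le_div_of_nonneg_right h1k hε.le <;> skip)
        have b2 : (n₂ : ℝ) ≤ (L - t) / ε := le_trans hb₂ (by
          apply div_le_div_of_nonneg_right h2k hε.le <;> skip)
        rw [← hL]
        calc (n₁:ℝ) + n₂ ≤ t / ε + (L - t) / ε := by linarith
          _ = L / ε := by rw [← add_div, add_sub_cancel]
      · simp [hf₁0]
      · have : ¬ (n₁ + n₂ ≤ n₁) := by omega
        simp only [this, if_false]
        simpa using hf₂n
      · intro m hm
        by_cases hmlt : m < n₁
        · have h1' : m ≤ n₁ := le_of_lt hmlt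
          have h2' : m + 1 ≤ n₁ := hmlt
          simp only [if_pos h1', if_pos h2']
          exact he₁ m hmlt
        · push_neg at hmlt
          have h2' : ¬ (m + 1 ≤ n₁) := by omega
          have hfm : (if m ≤ n₁ then f₁ m else f₂ (m - n₁)) = f₂ (m - n₁) := by
            by_cases hm1 : m ≤ n₁
            · have : m = n₁ := le_antisymm hm1 hmlt
              subst this
              simp [hf₁n, ← hf₂0]
            · simp [hm1]
          simp only [hfm, if_neg h2']
          have : m + 1 - n₁ = (m - n₁) + 1 := by omega
          rw [this]
          exact he₂ (m - n₁) (by omega)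
    · push_neg at hcase
      refine ⟨1, fun m => if m = 0 then i else j, one_pos, ?_, rfl, rfl, ?_⟩
      · rw [Nat.cast_one, le_div_iff₀ hε, one_mul]
        exact hsep i j hij
      · intro m hm
        interval_cases m
        simp only [if_pos rfl, if_neg one_ne_zero]
        exact ⟨⟨hij, hu⟩, γ, L, hL, hgeo, h0, h1, fun k hki hkj t ht =>
          hcase k hki hkj t ht⟩

/-- If two vertices of the nerve `Γ_u` of an `ε`-separated
family of closed convex subsets of a complete CAT(-1) space are joined by an
edge, then they are joined in the subgraph `Γ'_u` by a path of length at most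
`u / ε`. -/
theorem statement6 {X : Type*} [MetricSpace X] [CompleteSpace X] (hX : CATMinusOne X)
    {ι : Type*} (A : ι → Set X) (ε : ℝ) (hε : 0 < ε)
    (hcl : ∀ i, IsClosed (A i)) (hconv : ∀ i, GConvex (A i))
    (hsep : ∀ i j, i ≠ j → ε ≤ setDist (A i) (A j))
    (hexists : ∀ i j, i ≠ j → ∃ (γ : ℝ → X) (L : ℝ), L = setDist (A i) (A j) ∧
      IsGeodesicOn γ 0 L ∧ γ 0 ∈ A i ∧ γ L ∈ A j)
    (u : ℝ) (i j : ι) (hadj : GammaAdj A u i j) :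
    ∃ (n : ℕ) (f : ℕ → ι), 0 < n ∧ (n : ℝ) ≤ u / ε ∧ f 0 = i ∧ f n = j ∧
      ∀ m < n, GammaPrimeAdj A u (f m) (f (m + 1)) := by
  obtain ⟨hij, hu⟩ := hadj
  obtain ⟨N, hNge⟩ := exists_nat_ge (setDist (A i) (A j) / ε)
  have hL : setDist (A i) (A j) ≤ (N + 1) * ε := by
    rw [div_le_iff₀ hε] at hNge
    nlinarith
  obtain ⟨n, f, hn, hb, hf0, hfn, he⟩ :=
    key_induction A ε hε hsep hexists u N i j hij hu hL
  refine ⟨n, f, hn, ?_, hf0, hfn, he⟩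
  calc (n : ℝ) ≤ setDist (A i) (A j) / ε := hb
    _ ≤ u / ε := div_le_div_of_nonneg_right hu hε.le
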